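/- Let 4 ≤ b ≤ 8 and let d, m_1, …, m_b be integers with m_1 ≥ m_2 ≥ … ≥ m_b ≥ 0. For 2 ≤ i ≤ b set t_i = m_1 + m_i − d, and assume t_b ≥ 1. Define d' = d − 2m_b + 2t_b − 2 and m_i' = m_i − m_b + t_b − 1 for 1 ≤ i ≤ b. Then: (a) d' = m_1' − 1; (b) m_i' = t_i − 1 ≥ 0 for 2 ≤ i ≤ b; and (c) C(d'+3, 3) − Σ_{i=1}^{b} C(m_i'+2, 3) = − Σ_{i=2}^{b} C(t_i + 1, 3). In particular the Euler characteristic χ(N_b) of the system N_b = L_3(d', m_1', …, m_b') equals −Σ_{i=2}^{b} C(t_i+1,3), and since its degree is one less than its largest multiplicity, N_b has no nonzero sections. -/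

import Mathlib

/-- `C(n,3) = n(n-1)(n-2)/6` for an integer `n`. -/
def intChoose3 (n : ℤ) : ℤ := n * (n - 1) * (n - 2) / 6

/-- Claim 4.4 of the paper about the system `N_b = L_3(d', m_1', …, m_b')` with
`d' = d - 2m_b + 2t_b - 2` and `m_i' = m_i - m_b + t_b - 1`, where `t_i = m_1 + m_i - d`:
one has `d' = m_1' - 1`, `m_i' = t_i - 1 ≥ 0` for `2 ≤ i ≤ b`, and
`C(d'+3,3) - ∑_{i=1}^b C(m_i'+2,3) = -∑_{i=2}^b C(t_i+1,3)`. -/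
theorem euler_characteristic_Nb
    (b : ℕ) (hb1 : 4 ≤ b) (hb2 : b ≤ 8) (d : ℤ) (m : ℕ → ℤ)
    (hsort : ∀ i j : ℕ, 1 ≤ i → i ≤ j → j ≤ b → m j ≤ m i)
    (hpos : 0 ≤ m b)
    (t : ℕ → ℤ) (ht : ∀ i, 2 ≤ i → i ≤ b → t i = m 1 + m i - d)
    (htb : 1 ≤ t b)
    (d' : ℤ) (hd' : d' = d - 2 * m b + 2 * t b - 2)
    (m' : ℕ → ℤ) (hm' : ∀ i, 1 ≤ i → i ≤ b → m' i = m i - m b + t b - 1) :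
    d' = m' 1 - 1 ∧
    (∀ i, 2 ≤ i → i ≤ b → m' i = t i - 1 ∧ 0 ≤ m' i) ∧
    intChoose3 (d' + 3) - ∑ i ∈ Finset.Icc 1 b, intChoose3 (m' i + 2) =
      -∑ i ∈ Finset.Icc 2 b, intChoose3 (t i + 1) := by
  have hb : (2:ℕ) ≤ b := by omega
  have htbeq : t b = m 1 + m b - d := ht b hb le_rfl
  have h1 : d' = m' 1 - 1 := by
    rw [hd', hm' 1 (by omega) (by omega), htbeq]; ring
  have h2 : ∀ i, 2 ≤ i → i ≤ b → m' i = t i - 1 ∧ 0 ≤ m' i := by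
    intro i h2i hib
    have hmi : m' i = t i - 1 := by
      rw [hm' i (by omega) hib, ht i h2i hib, htbeq]; ring
    have hmb : m b ≤ m i := hsort i b (by omega) hib le_rfl
    refine ⟨hmi, ?_⟩
    rw [hm' i (by omega) hib]
    omega
  refine ⟨h1, h2, ?_⟩
  have hsplit : Finset.Icc 1 b = insert 1 (Finset.Icc 2 b) := by
    ext x; simp [Finset.mem_Icc, Finset.mem_insert]; omega
  rw [hsplit, Finset.sum_insert (by simp)]
  have hdd : d' + 3 = m' 1 + 2 := by rw [h1]; ring
  rw [hdd]
  have hsum : ∑ i ∈ Finset.Icc 2 b, intChoose3 (m' i + 2)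
      = ∑ i ∈ Finset.Icc 2 b, intChoose3 (t i + 1) := by
    refine Finset.sum_congr rfl ?_
    intro i hi
    simp only [Finset.mem_Icc] at hi
    rw [(h2 i hi.1 hi.2).1]
    ring_nf
  rw [hsum]; ring
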